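/- Let G be a finitely generated group, p a prime, I a totally ordered set, and (N_i)_{i ∈ I} a family of normal subgroups of G with N_i ⊆ N_j whenever i ≤ j. Let N = ⋃_{i ∈ I} N_i. Let K be a normal subgroup of G/N of index a power of p and let H' be the preimage of K under the quotient map G → G/N. Then there exists n ∈ I such that for all i ≥ n, d_p(H'/N_i) = d_p(K), where H'/N_i denotes the image of H' in G/N_i. -/

import Mathlib

/-- `dGen G` is the minimal number of generators of the group `G`. -/
noncomputable def dGen (G : Type*) [Group G] : ℕ :=
  sInf {n : ℕ | ∃ S : Finset G, S.card = n ∧ Subgroup.closure (S : Set G) = ⊤}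

/-- The rank gradient of `G`. -/
noncomputable def rankGradient (G : Type*) [Group G] : ℝ :=
  sInf {r : ℝ | ∃ H : Subgroup G, H.index ≠ 0 ∧ r = ((dGen H : ℝ) - 1) / (H.index : ℝ)}

open scoped commutatorElement

/-- The subgroup `[G,G]G^p` of `G` (as a normal closure of its generators). -/
def pCommPow (p : ℕ) (G : Type*) [Group G] : Subgroup G :=
  Subgroup.normalClosure ({x | ∃ a b : G, x = ⁅a, b⁆} ∪ {x | ∃ g : G, x = g ^ p})

instance pCommPow_normal (p : ℕ) (G : Type*) [Group G] : (pCommPow p G).Normal :=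
  Subgroup.normalClosure_normal

/-- `d_p(G) = d(G/([G,G]G^p))`. -/
noncomputable def dp (p : ℕ) (G : Type*) [Group G] : ℕ :=
  dGen (G ⧸ pCommPow p G)

/-- The `p`-gradient of `G`. -/
noncomputable def pGradient (p : ℕ) (G : Type*) [Group G] : ℝ :=
  sInf {r : ℝ | ∃ H : Subgroup G, H.Normal ∧ (∃ k : ℕ, H.index = p ^ k) ∧
    r = ((dp p H : ℝ) - 1) / (H.index : ℝ)}

/-- The `p`-residual: intersection of all normal subgroups of `p`-power index. -/
def pResidual (p : ℕ) (G : Type*) [Group G] : Subgroup G :=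
  ⨅ H ∈ {H : Subgroup G | H.Normal ∧ ∃ k : ℕ, H.index = p ^ k}, H

instance pResidual_normal (p : ℕ) (G : Type*) [Group G] : (pResidual p G).Normal := by
  constructor
  intro n hn g
  simp only [pResidual, Subgroup.mem_iInf] at hn ⊢
  intro H hH
  exact hH.1.conj_mem n (hn H hH) g


open Function

section helpers
variable {A B : Type*} [Group A] [Group B]

lemma genSet_subset (e : A ≃* B) :
    {n : ℕ | ∃ S : Finset A, S.card = n ∧ Subgroup.closure (S : Set A) = ⊤} ⊆
    {n : ℕ | ∃ S : Finset B, S.card = n ∧ Subgroup.closure (S : Set B) = ⊤} := by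
  classical
  rintro n ⟨S, hc, hcl⟩
  refine ⟨S.image e, by rw [Finset.card_image_of_injective _ e.injective, hc], ?_⟩
  rw [Finset.coe_image]
  have : Subgroup.closure (⇑e '' ↑S) = (Subgroup.closure (S : Set A)).map (e : A →* B) :=
    (MonoidHom.map_closure (e : A →* B) _).symm
  rw [this, hcl, Subgroup.map_top_of_surjective _ e.surjective]

lemma dGen_eq_of_mulEquiv (e : A ≃* B) : dGen A = dGen B := by
  unfold dGen
  rw [Set.Subset.antisymm (genSet_subset e) (genSet_subset e.symm)]

lemma pCommPow_comap (p : ℕ) (f : A →* B) (hf : Surjective f) :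
    (pCommPow p B).comap f = pCommPow p A ⊔ f.ker := by
  have himg : f '' ({x | ∃ a b : A, x = ⁅a, b⁆} ∪ {x | ∃ g : A, x = g ^ p}) =
      ({x | ∃ a b : B, x = ⁅a, b⁆} ∪ {x | ∃ g : B, x = g ^ p}) := by
    ext y
    simp only [Set.image_union, Set.mem_union, Set.mem_image, Set.mem_setOf_eq]
    constructor
    · rintro (⟨x, ⟨a, b, rfl⟩, rfl⟩ | ⟨x, ⟨g, rfl⟩, rfl⟩)
      · exact Or.inl ⟨f a, f b, by simp [commutatorElement_def]⟩
      · exact Or.inr ⟨f g, by simp⟩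
    · rintro (⟨a, b, rfl⟩ | ⟨g, rfl⟩)
      · obtain ⟨a', rfl⟩ := hf a; obtain ⟨b', rfl⟩ := hf b
        exact Or.inl ⟨⁅a', b'⁆, ⟨a', b', rfl⟩, by simp [commutatorElement_def]⟩
      · obtain ⟨g', rfl⟩ := hf g
        exact Or.inr ⟨g' ^ p, ⟨g', rfl⟩, by simp⟩
  have hmap : (pCommPow p A).map f = pCommPow p B := by
    rw [pCommPow, Subgroup.map_normalClosure _ _ hf, himg]; rfl
  rw [← hmap, Subgroup.comap_map_eq]

lemma dp_eq_of_surjective (p : ℕ) (f : A →* B) (hf : Surjective f) :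
    dp p B = dGen (A ⧸ (pCommPow p A ⊔ f.ker)) := by
  let g := (QuotientGroup.mk' (pCommPow p B)).comp f
  have hg : Surjective g := (QuotientGroup.mk'_surjective _).comp hf
  have hker : g.ker = pCommPow p A ⊔ f.ker := by
    show ((QuotientGroup.mk' (pCommPow p B)).comp f).ker = _
    rw [← MonoidHom.comap_ker, QuotientGroup.ker_mk', pCommPow_comap p f hf]
  calc dp p B = dGen (B ⧸ pCommPow p B) := rfl
  _ = dGen (A ⧸ g.ker) :=
      (dGen_eq_of_mulEquiv (QuotientGroup.quotientKerEquivOfSurjective g hg)).symm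
  _ = dGen (A ⧸ (pCommPow p A ⊔ f.ker)) :=
      dGen_eq_of_mulEquiv (QuotientGroup.quotientMulEquivOfEq hker)

end helpers

/-- for `K ⊴ G/N` of `p`-power index with preimage `H'` in `G`, there is
an `n ∈ I` such that `d_p(H'/N_i) = d_p(K)` for all `i ≥ n`. -/
theorem dp_eventually_constant (G : Type*) [Group G] [Group.FG G] (p : ℕ) (hp : p.Prime)
    (I : Type*) [LinearOrder I] (Nf : I → Subgroup G) [hNf : ∀ i, (Nf i).Normal]
    (hmono : ∀ i j : I, i ≤ j → Nf i ≤ Nf j)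
    (N : Subgroup G) [hN : N.Normal] (hNU : (N : Set G) = ⋃ i, (Nf i : Set G))
    (K : Subgroup (G ⧸ N)) [K.Normal] (hK : ∃ k : ℕ, K.index = p ^ k) :
    ∃ n : I, ∀ i : I, n ≤ i →
      dp p ((K.comap (QuotientGroup.mk' N)).map (QuotientGroup.mk' (Nf i))) = dp p K := by
  classical
  obtain ⟨k, hKi⟩ := hK
  set H' := K.comap (QuotientGroup.mk' N) with hH'def
  -- basic inclusions
  have hNle : ∀ i, Nf i ≤ N := fun i x hx => by
    rw [← SetLike.mem_coe, hNU]; exact Set.mem_iUnion.2 ⟨i, hx⟩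
  -- finite generation of H'
  haveI : H'.FiniteIndex := ⟨by
    rw [hH'def, Subgroup.index_comap_of_surjective _ (QuotientGroup.mk'_surjective N), hKi]
    exact pow_ne_zero _ hp.ne_zero⟩
  haveI : Group.FG H' := Subgroup.fg_of_index_ne_zero _
  set M := pCommPow p H' with hMdef
  -- the quotient H' / M is finite
  haveI : Finite (H' ⧸ M) := by
    letI cg : CommGroup (H' ⧸ M) :=
      { (inferInstance : Group (H' ⧸ M)) with
        mul_comm := by
          intro a b
          induction a using QuotientGroup.induction_on
          induction b using QuotientGroup.induction_on
          rename_i x y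
          show QuotientGroup.mk (x * y) = QuotientGroup.mk (y * x)
          rw [QuotientGroup.eq_iff_div_mem]
          have h1 : x * y / (y * x) = ⁅x, y⁆ := by simp [commutatorElement_def, div_eq_mul_inv, mul_inv_rev, mul_assoc]
          rw [h1]
          exact Subgroup.subset_normalClosure (Or.inl ⟨x, y, rfl⟩) }
    haveI : Group.FG (H' ⧸ M) := Group.fg_of_surjective (QuotientGroup.mk'_surjective M)
    apply CommGroup.finite_of_fg_torsion
    intro g
    obtain ⟨x, rfl⟩ := QuotientGroup.mk'_surjective M g
    refine isOfFinOrder_iff_pow_eq_one.2 ⟨p, hp.pos, ?_⟩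
    show QuotientGroup.mk (x ^ p) = 1
    exact (QuotientGroup.eq_one_iff _).2 (Subgroup.subset_normalClosure (Or.inr ⟨x, rfl⟩))
  haveI : Finite (Subgroup (H' ⧸ M)) :=
    Finite.of_injective (fun H => (H : Set (H' ⧸ M))) SetLike.coe_injective
  -- the family T and its image in the finite quotient
  set T : I → Subgroup H' := fun i => M ⊔ (Nf i).subgroupOf H' with hTdef
  have hMT : ∀ i, M ≤ T i := fun i => le_sup_left
  have hTmono : ∀ i j, i ≤ j → T i ≤ T j := fun i j hij =>
    sup_le_sup_left (Subgroup.comap_mono (hmono i j hij)) _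
  set π := QuotientGroup.mk' M with hπdef
  set S : I → Subgroup (H' ⧸ M) := fun i => (T i).map π with hSdef
  have hTS : ∀ i, T i = (S i).comap π := fun i => by
    rw [hSdef, Subgroup.comap_map_eq, QuotientGroup.ker_mk', sup_eq_left.2 (hMT i)]
  -- a maximal element of the family S
  have hI : Nonempty I := by
    have h1 : (1 : G) ∈ (N : Set G) := N.one_mem
    rw [hNU] at h1
    obtain ⟨s, ⟨i, rfl⟩, -⟩ := h1
    exact ⟨i⟩
  obtain ⟨i0⟩ := hI
  obtain ⟨n, -, hmax⟩ := Set.Finite.exists_maximalFor' S Set.univ (Set.toFinite _)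
    ⟨i0, trivial⟩
  have hTn : ∀ i, n ≤ i → T i = T n := fun i hi => by
    rw [hTS, hTS, le_antisymm (hmax (j := i) trivial (Subgroup.map_mono (hTmono n i hi))) (Subgroup.map_mono (hTmono n i hi))]
  -- T n equals the "limit" subgroup
  set TN : Subgroup H' := M ⊔ N.subgroupOf H' with hTNdef
  have hTiTN : ∀ i, n ≤ i → T i = TN := by
    intro i hi
    refine le_antisymm (sup_le_sup_left (Subgroup.comap_mono (hNle i)) _) ?_
    rw [hTn i hi]
    refine sup_le le_sup_left ?_
    intro x hx
    rw [Subgroup.mem_subgroupOf, ← SetLike.mem_coe, hNU] at hx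
    obtain ⟨s, ⟨j, rfl⟩, hj⟩ := hx
    have hxj : x ∈ T j := le_sup_right (α := Subgroup H')
      (a := M) (Subgroup.mem_subgroupOf.2 hj)
    rcases le_total j n with h | h
    · exact hTmono j n h hxj
    · rw [← hTn j h]; exact hxj
  -- conclude
  refine ⟨n, fun i hi => ?_⟩
  -- left side
  have hkerfi : ((QuotientGroup.mk' (Nf i)).subgroupMap H').ker = (Nf i).subgroupOf H' := by
    ext x
    simp only [MonoidHom.mem_ker, Subgroup.mem_subgroupOf, Subtype.ext_iff,
      MonoidHom.subgroupMap_apply_coe, QuotientGroup.coe_mk']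
    rw [Subgroup.coe_one, QuotientGroup.eq_one_iff]
  have hL : dp p (H'.map (QuotientGroup.mk' (Nf i))) = dGen (H' ⧸ T i) := by
    rw [dp_eq_of_surjective p ((QuotientGroup.mk' (Nf i)).subgroupMap H')
      (MonoidHom.subgroupMap_surjective _ _)]
    exact dGen_eq_of_mulEquiv (QuotientGroup.quotientMulEquivOfEq (by rw [hkerfi]))
  -- right side
  have hKmap : H'.map (QuotientGroup.mk' N) = K :=
    Subgroup.map_comap_eq_self_of_surjective (QuotientGroup.mk'_surjective N) K
  have hkerfN : ((QuotientGroup.mk' N).subgroupMap H').ker = N.subgroupOf H' := by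
    ext x
    simp only [MonoidHom.mem_ker, Subgroup.mem_subgroupOf, Subtype.ext_iff,
      MonoidHom.subgroupMap_apply_coe, QuotientGroup.coe_mk']
    rw [Subgroup.coe_one, QuotientGroup.eq_one_iff]
  have hR : dp p K = dGen (H' ⧸ TN) := by
    rw [← hKmap, dp_eq_of_surjective p ((QuotientGroup.mk' N).subgroupMap H')
      (MonoidHom.subgroupMap_surjective _ _)]
    exact dGen_eq_of_mulEquiv (QuotientGroup.quotientMulEquivOfEq (by rw [hkerfN]))
  rw [hL, hR]
  exact dGen_eq_of_mulEquiv (QuotientGroup.quotientMulEquivOfEq (hTiTN i hi))
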